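/- For positive integers n and m, the number of m-weight file equivalence classes of Ferrers boards fitting in Δ_{n,m} is (m+1)^{n−1}. -/

import Mathlib

/-- The `m`-falling factorial `x↓_{n,m} = x(x-m)(x-2m)⋯(x-(n-1)m)`. -/
def fallFact (x : ℤ) (n m : ℕ) : ℤ := ∏ i ∈ Finset.range n, (x - (m : ℤ) * i)

/-- The cells of the Ferrers board with column heights `b 0, b 1, …, b n`
(columns 0-indexed, rows 1-indexed). -/
def cells0 (b : ℕ → ℕ) (n : ℕ) : Finset (ℕ × ℕ) :=
  ((Finset.Icc 1 ((Finset.range (n + 1)).sup b)) ×ˢ Finset.range (n + 1)).filter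
    fun c => c.1 ≤ b c.2

/-- The `m`-weight of a file placement: `∏_i 1↓_{y_i,m}` where `y_i` is the number
of rooks in row `i`. -/
def wtm (m : ℕ) (F : Finset (ℕ × ℕ)) : ℤ :=
  ∏ i ∈ F.image Prod.fst, fallFact 1 ((F.filter fun c => c.1 = i).card) m

/-- `f_{k,m}(B)`: the sum of `m`-weights over all file placements (no two rooks in
the same column) of `k` rooks on the board `B = (b_0, …, b_n)`. -/
def fkm (m : ℕ) (b : ℕ → ℕ) (n k : ℕ) : ℤ :=
  ∑ F ∈ (cells0 b n).powerset.filter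
      (fun F => (∀ c ∈ F, ∀ c' ∈ F, c.2 = c'.2 → c = c') ∧ F.card = k),
    wtm m F

lemma mem_cells0 {b : ℕ → ℕ} {n : ℕ} {c : ℕ × ℕ} :
    c ∈ cells0 b n ↔ 1 ≤ c.1 ∧ c.1 ≤ b c.2 ∧ c.2 ≤ n := by
  simp only [cells0, Finset.mem_filter, Finset.mem_product, Finset.mem_Icc, Finset.mem_range,
    Nat.lt_succ_iff]
  constructor
  · rintro ⟨⟨⟨h1, _⟩, h2⟩, h3⟩; exact ⟨h1, h3, h2⟩
  · rintro ⟨h1, h2, h3⟩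
    exact ⟨⟨⟨h1, le_trans h2 (Finset.le_sup (Finset.mem_range.2 (Nat.lt_succ_of_le h3)))⟩, h3⟩, h2⟩

lemma fallFact_succ (x : ℤ) (n m : ℕ) :
    fallFact x (n + 1) m = fallFact x n m * (x - m * n) := Finset.prod_range_succ _ _

lemma wtm_empty (m : ℕ) : wtm m ∅ = 1 := by simp [wtm]

lemma wtm_insert (m : ℕ) (F : Finset (ℕ × ℕ)) (c : ℕ × ℕ) (hc : c ∉ F) :
    wtm m (insert c F) = wtm m F * (1 - (m : ℤ) * (F.filter fun d => d.1 = c.1).card) := by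
  classical
  unfold wtm
  have himg : (insert c F).image Prod.fst = insert c.1 (F.image Prod.fst) :=
    Finset.image_insert _ _ _
  have hfilt : ∀ i, ((insert c F).filter fun d => d.1 = i) =
      if c.1 = i then insert c (F.filter fun d => d.1 = i) else (F.filter fun d => d.1 = i) := by
    intro i; exact Finset.filter_insert _ _ _
  by_cases hmem : c.1 ∈ F.image Prod.fst
  · rw [himg, Finset.insert_eq_self.2 hmem]
    rw [← Finset.mul_prod_erase _ _ hmem, ← Finset.mul_prod_erase _ _ hmem, mul_right_comm]
    congr 1
    · congr 1
      · rw [hfilt c.1, if_pos rfl, Finset.card_insert_of_notMem (fun h => hc (Finset.mem_filter.1 h).1),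
          fallFact_succ]
    · apply Finset.prod_congr rfl
      intro i hi
      have : c.1 ≠ i := (Finset.mem_erase.1 hi).1.symm
      rw [hfilt i, if_neg this]
  · rw [himg, Finset.prod_insert hmem]
    have h1 : ((insert c F).filter fun d => d.1 = c.1) = {c} := by
      rw [hfilt c.1, if_pos rfl]
      have : (F.filter fun d => d.1 = c.1) = ∅ := by
        rw [Finset.filter_eq_empty_iff]
        intro d hd hdc
        exact hmem (Finset.mem_image.2 ⟨d, hd, hdc⟩)
      rw [this]; rfl
    have h2 : (F.filter fun d => d.1 = c.1) = ∅ := by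
      rw [Finset.filter_eq_empty_iff]
      intro d hd hdc
      exact hmem (Finset.mem_image.2 ⟨d, hd, hdc⟩)
    rw [h1, h2]
    simp only [Finset.card_singleton, Finset.card_empty, Nat.cast_zero, mul_zero, sub_zero, mul_one]
    have hf1 : fallFact 1 1 m = 1 := by simp [fallFact]
    rw [hf1, one_mul]
    apply Finset.prod_congr rfl
    intro i hi
    have : c.1 ≠ i := by rintro rfl; exact hmem hi
    rw [hfilt i, if_neg this]

def placements (b : ℕ → ℕ) (n k : ℕ) : Finset (Finset (ℕ × ℕ)) :=
  (cells0 b n).powerset.filter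
    (fun F => (∀ c ∈ F, ∀ c' ∈ F, c.2 = c'.2 → c = c') ∧ F.card = k)

lemma fkm_eq (m : ℕ) (b : ℕ → ℕ) (n k : ℕ) :
    fkm m b n k = ∑ F ∈ placements b n k, wtm m F := rfl

lemma mem_placements {b : ℕ → ℕ} {n k : ℕ} {F : Finset (ℕ × ℕ)} :
    F ∈ placements b n k ↔
      (∀ c ∈ F, 1 ≤ c.1 ∧ c.1 ≤ b c.2 ∧ c.2 ≤ n) ∧
      (∀ c ∈ F, ∀ c' ∈ F, c.2 = c'.2 → c = c') ∧ F.card = k := by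
  simp only [placements, Finset.mem_filter, Finset.mem_powerset, Finset.subset_iff, mem_cells0,
    and_assoc]

lemma fkm_zero (m : ℕ) (b : ℕ → ℕ) (n : ℕ) : fkm m b n 0 = 1 := by
  rw [fkm_eq]
  have : placements b n 0 = {∅} := by
    ext F
    simp only [mem_placements, Finset.mem_singleton, Finset.card_eq_zero]
    constructor
    · rintro ⟨-, -, h⟩; exact h
    · rintro rfl; simp
  rw [this, Finset.sum_singleton, wtm_empty]

lemma card_le_of_mem_placements {b : ℕ → ℕ} {n k : ℕ} {F : Finset (ℕ × ℕ)}
    (h : F ∈ placements b n k) : k ≤ n + 1 := by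
  rw [mem_placements] at h
  obtain ⟨hcells, hinj, hcard⟩ := h
  have h1 : F.card = (F.image Prod.snd).card := by
    rw [Finset.card_image_of_injOn]
    intro c hc c' hc' hcc
    exact hinj c hc c' hc' hcc
  have h2 : F.image Prod.snd ⊆ Finset.range (n + 1) := by
    intro j hj
    obtain ⟨c, hc, rfl⟩ := Finset.mem_image.1 hj
    exact Finset.mem_range.2 (Nat.lt_succ_of_le (hcells c hc).2.2)
  calc k = F.card := hcard.symm
    _ = (F.image Prod.snd).card := h1
    _ ≤ (Finset.range (n + 1)).card := Finset.card_le_card h2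
    _ = n + 1 := Finset.card_range _

lemma fkm_eq_zero_of_gt (m : ℕ) (b : ℕ → ℕ) (n k : ℕ) (hk : n + 1 < k) :
    fkm m b n k = 0 := by
  rw [fkm_eq]
  apply Finset.sum_eq_zero
  intro F hF
  exact absurd (card_le_of_mem_placements hF) (by omega)

lemma fkm_one_col (m : ℕ) (b : ℕ → ℕ) : fkm m b 0 1 = b 0 := by
  rw [fkm_eq]
  have key : placements b 0 1 = (Finset.Icc 1 (b 0)).image (fun r => ({(r, 0)} : Finset (ℕ × ℕ))) := by
    ext F
    simp only [mem_placements, Finset.mem_image, Finset.mem_Icc, Finset.card_eq_one]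
    constructor
    · rintro ⟨hcells, hinj, c, rfl⟩
      have hc := hcells c (Finset.mem_singleton_self c)
      have hc2 : c.2 = 0 := Nat.le_zero.1 hc.2.2
      refine ⟨c.1, ⟨hc.1, hc2 ▸ hc.2.1⟩, ?_⟩
      rw [← hc2]
    · rintro ⟨r, ⟨h1, h2⟩, rfl⟩
      refine ⟨?_, ?_, ⟨(r, 0), rfl⟩⟩
      · intro c hc; rw [Finset.mem_singleton] at hc; subst hc; exact ⟨h1, h2, le_refl 0⟩
      · intro c hc c' hc' _
        rw [Finset.mem_singleton] at hc hc'; rw [hc, hc']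
  rw [key, Finset.sum_image]
  · have : ∀ r ∈ Finset.Icc 1 (b 0), wtm m {(r, 0)} = 1 := by
      intro r _
      unfold wtm
      rw [Finset.image_singleton]
      rw [Finset.prod_singleton]
      have : (Finset.filter (fun c => c.1 = (r, 0).1) {((r : ℕ), (0 : ℕ))}).card = 1 := by
        rw [Finset.filter_singleton, if_pos rfl, Finset.card_singleton]
      rw [this]
      simp [fallFact]
    rw [Finset.sum_congr rfl this]
    simp
  · intro r _ s _ h
    have : (r, 0) ∈ ({(s, 0)} : Finset (ℕ × ℕ)) := by
      have h' : ({(r, 0)} : Finset (ℕ × ℕ)) = {(s, 0)} := h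
      exact h' ▸ Finset.mem_singleton_self _
    rw [Finset.mem_singleton] at this
    exact (Prod.mk.injEq .. ▸ this).1

set_option maxHeartbeats 2000000 in
lemma fkm_rec (m : ℕ) (b : ℕ → ℕ) (n k : ℕ) (hb : ∀ j ≤ n, b j ≤ b (n + 1)) :
    fkm m b (n + 1) (k + 1) =
      fkm m b n (k + 1) + ((b (n + 1) : ℤ) - m * k) * fkm m b n k := by
  rw [fkm_eq, fkm_eq, fkm_eq]
  rw [← Finset.sum_filter_add_sum_filter_not (placements b (n+1) (k+1))
    (fun F => ∀ c ∈ F, c.2 ≠ n + 1)]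
  congr 1
  · -- part A
    apply Finset.sum_congr _ (fun _ _ => rfl)
    ext F
    simp only [Finset.mem_filter, mem_placements]
    constructor
    · rintro ⟨⟨hcells, hinj, hcard⟩, hno⟩
      refine ⟨fun c hc => ⟨(hcells c hc).1, (hcells c hc).2.1, ?_⟩, hinj, hcard⟩
      have := (hcells c hc).2.2
      have := hno c hc
      omega
    · rintro ⟨hcells, hinj, hcard⟩
      exact ⟨⟨fun c hc => ⟨(hcells c hc).1, (hcells c hc).2.1, by have := (hcells c hc).2.2; omega⟩,
        hinj, hcard⟩, fun c hc => by have := (hcells c hc).2.2; omega⟩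
  · -- part B
    have key : ∑ p ∈ (placements b n k) ×ˢ Finset.Icc 1 (b (n+1)),
            wtm m (insert (p.2, n+1) p.1)
        = ∑ F ∈ (placements b (n+1) (k+1)).filter (fun F => ¬ ∀ c ∈ F, c.2 ≠ n + 1), wtm m F := by
      refine Finset.sum_nbij' (i := fun (p : Finset (ℕ × ℕ) × ℕ) => insert (p.2, n+1) p.1)
        (j := fun (F : Finset (ℕ × ℕ)) => (F.filter (fun c => c.2 ≠ n+1),
          ∑ c ∈ F.filter (fun c => c.2 = n+1), c.1)) ?_ ?_ ?_ ?_ ?_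
      · -- hj : backward
        rintro ⟨F', r⟩ hp
        rw [Finset.mem_product] at hp
        obtain ⟨hF', hr⟩ := hp
        rw [Finset.mem_Icc] at hr
        rw [mem_placements] at hF'
        obtain ⟨hcells, hinj, hcard⟩ := hF'
        have hnotmem : ((r, n+1) : ℕ × ℕ) ∉ F' := fun h => by
          have := (hcells _ h).2.2; omega
        rw [Finset.mem_filter]
        constructor
        · rw [mem_placements]
          refine ⟨?_, ?_, ?_⟩
          · intro c hc
            rw [Finset.mem_insert] at hc
            rcases hc with rfl | hc
            · exact ⟨hr.1, hr.2, le_refl _⟩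
            · have := hcells c hc; exact ⟨this.1, this.2.1, by omega⟩
          · intro c hc c' hc' h
            rw [Finset.mem_insert] at hc hc'
            rcases hc with rfl | hc <;> rcases hc' with rfl | hc'
            · rfl
            · exact absurd ((hcells c' hc').2.2) (by simp at h ⊢; omega)
            · exact absurd ((hcells c hc).2.2) (by simp at h ⊢; omega)
            · exact hinj c hc c' hc' h
          · rw [Finset.card_insert_of_notMem hnotmem, hcard]
        · push_neg
          exact ⟨(r, n+1), Finset.mem_insert_self _ _, rfl⟩
      · -- hi : forward (from filtered placements to product)
        intro F hF
        rw [Finset.mem_filter] at hF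
        obtain ⟨hP, hcol⟩ := hF
        push_neg at hcol
        obtain ⟨c0, hc0F, hc02⟩ := hcol
        rw [mem_placements] at hP
        obtain ⟨hcells, hinj, hcard⟩ := hP
        have hsing : F.filter (fun c => c.2 = n+1) = {c0} := by
          rw [Finset.eq_singleton_iff_unique_mem]
          refine ⟨Finset.mem_filter.2 ⟨hc0F, hc02⟩, fun d hd => ?_⟩
          rw [Finset.mem_filter] at hd
          exact hinj d hd.1 c0 hc0F (hd.2.trans hc02.symm)
        have herase : F.filter (fun c => ¬ c.2 = n+1) = F.erase c0 := by
          rw [Finset.filter_not, hsing, Finset.sdiff_singleton_eq_erase]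
        rw [Finset.mem_product]
        constructor
        · rw [mem_placements]
          refine ⟨?_, ?_, ?_⟩
          · intro c hc
            simp only [ne_eq] at hc
            rw [herase, Finset.mem_erase] at hc
            have h1 := hcells c hc.2
            have h2 : c.2 ≠ n + 1 := fun h => hc.1 (hinj c hc.2 c0 hc0F (h.trans hc02.symm))
            exact ⟨h1.1, h1.2.1, by have := h1.2.2; omega⟩
          · intro c hc c' hc' h
            simp only [ne_eq] at hc hc'
            rw [herase, Finset.mem_erase] at hc hc'
            exact hinj c hc.2 c' hc'.2 h
          · simp only [ne_eq]
            rw [herase, Finset.card_erase_of_mem hc0F, hcard, Nat.add_sub_cancel]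
        · simp only [ne_eq]
          rw [hsing, Finset.sum_singleton]
          have := hcells c0 hc0F
          rw [Finset.mem_Icc]
          exact ⟨this.1, hc02 ▸ this.2.1⟩
      · -- right inverse
        rintro ⟨F', r⟩ hp
        rw [Finset.mem_product] at hp
        obtain ⟨hF', hr⟩ := hp
        rw [mem_placements] at hF'
        obtain ⟨hcells, hinj, hcard⟩ := hF'
        have hcols : ∀ c ∈ F', ¬ c.2 = n + 1 := fun c hc h => by
          have := (hcells c hc).2.2; omega
        have h1 : (insert ((r, n+1) : ℕ × ℕ) F').filter (fun c => ¬ c.2 = n+1) = F' := by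
          rw [Finset.filter_insert, if_neg (by simp)]
          exact Finset.filter_true_of_mem hcols
        have h2 : (insert ((r, n+1) : ℕ × ℕ) F').filter (fun c => c.2 = n+1)
            = {((r, n+1) : ℕ × ℕ)} := by
          rw [Finset.filter_insert, if_pos rfl]
          have : F'.filter (fun c => c.2 = n+1) = ∅ := by
            rw [Finset.filter_eq_empty_iff]
            exact hcols
          rw [this]; rfl
        simp only [ne_eq, h1, h2, Finset.sum_singleton]

      ·
        intro F hF
        rw [Finset.mem_filter] at hF
        obtain ⟨hP, hcol⟩ := hF
        push_neg at hcol
        obtain ⟨c0, hc0F, hc02⟩ := hcol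
        rw [mem_placements] at hP
        obtain ⟨hcells, hinj, hcard⟩ := hP
        have hsing : F.filter (fun c => c.2 = n+1) = {c0} := by
          rw [Finset.eq_singleton_iff_unique_mem]
          refine ⟨Finset.mem_filter.2 ⟨hc0F, hc02⟩, fun d hd => ?_⟩
          rw [Finset.mem_filter] at hd
          exact hinj d hd.1 c0 hc0F (hd.2.trans hc02.symm)
        have herase : F.filter (fun c => ¬ c.2 = n+1) = F.erase c0 := by
          rw [Finset.filter_not, hsing, Finset.sdiff_singleton_eq_erase]
        simp only [ne_eq, hsing, herase, Finset.sum_singleton]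
        have hc0 : ((c0.1, n+1) : ℕ × ℕ) = c0 := by
          rw [← hc02]
        rw [hc0, Finset.insert_erase hc0F]
      · intro p hp; rfl
    rw [← key, Finset.sum_product, Finset.mul_sum]
    apply Finset.sum_congr rfl
    intro F' hF'
    rw [mem_placements] at hF'
    obtain ⟨hcells, hinj, hcard⟩ := hF'
    have hnm : ∀ r : ℕ, ((r, n+1) : ℕ × ℕ) ∉ F' := fun r h => by
      have := (hcells _ h).2.2; omega
    have step : ∀ r ∈ Finset.Icc 1 (b (n+1)), wtm m (insert (r, n+1) F')
        = wtm m F' * (1 - (m : ℤ) * (F'.filter fun d => d.1 = r).card) := by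
      intro r _
      exact wtm_insert m F' (r, n+1) (hnm r)
    rw [Finset.sum_congr rfl step, ← Finset.mul_sum]
    have hrows : ∀ c ∈ F', c.1 ∈ Finset.Icc 1 (b (n+1)) := by
      intro c hc
      have h := hcells c hc
      exact Finset.mem_Icc.2 ⟨h.1, le_trans h.2.1 (hb c.2 h.2.2)⟩
    have hcnt : ∑ r ∈ Finset.Icc 1 (b (n+1)), (F'.filter fun d => d.1 = r).card = F'.card :=
      (Finset.card_eq_sum_card_fiberwise hrows).symm
    have hsum : ∑ r ∈ Finset.Icc 1 (b (n+1)),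
        ((1 : ℤ) - (m : ℤ) * (F'.filter fun d => d.1 = r).card)
        = (b (n+1) : ℤ) - m * k := by
      rw [Finset.sum_sub_distrib, Finset.sum_const, ← Finset.mul_sum]
      have h1 : (Finset.Icc 1 (b (n+1))).card = b (n+1) := by
        rw [Nat.card_Icc]; omega
      have h2 : ∑ r ∈ Finset.Icc 1 (b (n+1)), ((F'.filter fun d => d.1 = r).card : ℤ)
          = (k : ℤ) := by
        rw [← Nat.cast_sum, hcnt, hcard]
      rw [h1, h2]
      simp
    rw [hsum, mul_comm]

open Polynomial in
noncomputable def ffPoly (m r : ℕ) : Polynomial ℤ :=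
  ∏ i ∈ Finset.range r, (X - C ((m : ℤ) * i))

open Polynomial

lemma ffPoly_succ (m r : ℕ) : ffPoly m (r + 1) = ffPoly m r * (X - C ((m : ℤ) * r)) :=
  Finset.prod_range_succ _ _

lemma ffPoly_monic (m r : ℕ) : (ffPoly m r).Monic :=
  monic_prod_of_monic _ _ (fun i _ => monic_X_sub_C _)

lemma ffPoly_natDegree (m r : ℕ) : (ffPoly m r).natDegree = r := by
  rw [ffPoly, natDegree_prod_of_monic _ _ (fun i _ => monic_X_sub_C _)]
  rw [Finset.sum_congr rfl (fun i (_ : i ∈ Finset.range r) => natDegree_X_sub_C ((m : ℤ) * i))]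
  simp

lemma prod_formula (m : ℕ) : ∀ (N : ℕ) (b : ℕ → ℕ), (∀ i j, i ≤ j → j ≤ N → b i ≤ b j) →
    ∏ j ∈ Finset.range (N + 1), (X - C ((m : ℤ) * j - b j)) =
      ∑ k ∈ Finset.range (N + 2), C (fkm m b N k) * ffPoly m (N + 1 - k) := by
  intro N
  induction N with
  | zero =>
    intro b _
    rw [Finset.prod_range_one]
    rw [Finset.sum_range_succ, Finset.sum_range_one]
    rw [fkm_zero, fkm_one_col]
    have h1 : ffPoly m 1 = X := by
      rw [ffPoly_succ, ffPoly]
      simp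
    have h0 : ffPoly m 0 = 1 := rfl
    rw [h1, h0]
    simp only [Nat.cast_zero, mul_zero, zero_sub, map_one, one_mul, mul_one]
    rw [map_neg, sub_neg_eq_add]
  | succ N ih =>
    intro b hb
    have hb' : ∀ i j, i ≤ j → j ≤ N → b i ≤ b j :=
      fun i j h1 h2 => hb i j h1 (le_trans h2 (Nat.le_succ N))
    rw [Finset.prod_range_succ, ih b hb']
    rw [Finset.sum_range_succ' _ (N + 2)]
    have hg0 : C (fkm m b (N + 1) 0) * ffPoly m (N + 2 - 0) = ffPoly m (N + 2) := by
      rw [fkm_zero, map_one, one_mul]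
      norm_num
    rw [hg0]
    have hrec : ∀ k : ℕ, C (fkm m b (N + 1) (k + 1)) =
        C (fkm m b N (k + 1)) + C ((b (N + 1) : ℤ) - m * k) * C (fkm m b N k) := by
      intro k
      rw [← map_mul, ← map_add]
      congr 1
      exact fkm_rec m b N k (fun j hj => hb j (N + 1) (by omega) (le_refl _))
    -- expand LHS
    rw [Finset.sum_mul]
    have hterm : ∀ k ∈ Finset.range (N + 2),
        C (fkm m b N k) * ffPoly m (N + 1 - k) * (X - C ((m : ℤ) * ((N + 1 : ℕ) : ℤ) - b (N + 1)))
        = C (fkm m b N k) * ffPoly m (N + 2 - k)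
          + C ((b (N + 1) : ℤ) - m * k) * (C (fkm m b N k) * ffPoly m (N + 1 - k)) := by
      intro k hk
      rw [Finset.mem_range] at hk
      have hk' : k ≤ N + 1 := by omega
      have hsplit : (X - C ((m : ℤ) * ((N + 1 : ℕ) : ℤ) - b (N + 1)))
          = (X - C ((m : ℤ) * ((N + 1 - k : ℕ) : ℤ))) + C ((b (N + 1) : ℤ) - m * k) := by
        have hC : C ((m : ℤ) * (((N + 1 - k : ℕ) : ℤ))) - C ((b (N + 1) : ℤ) - m * k)
            = C ((m : ℤ) * ((N + 1 : ℕ) : ℤ) - b (N + 1)) := by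
          rw [← map_sub]
          congr 1
          rw [Nat.cast_sub (by omega : k ≤ N + 1)]
          push_cast
          ring
        linear_combination hC
      have hP : ffPoly m (N + 1 - k) * (X - C ((m : ℤ) * ((N + 1 - k : ℕ) : ℤ)))
          = ffPoly m (N + 2 - k) := by
        have h2 : N + 2 - k = (N + 1 - k) + 1 := by omega
        rw [h2, ffPoly_succ]
      rw [hsplit, mul_add, mul_assoc, hP]
      ring
    rw [Finset.sum_congr rfl hterm, Finset.sum_add_distrib]
    -- expand RHS terms with the recurrence
    have hterm2 : ∀ k ∈ Finset.range (N + 2),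
        C (fkm m b (N + 1) (k + 1)) * ffPoly m (N + 2 - (k + 1))
        = C (fkm m b N (k + 1)) * ffPoly m (N + 1 - k)
          + C ((b (N + 1) : ℤ) - m * k) * (C (fkm m b N k) * ffPoly m (N + 1 - k)) := by
      intro k _
      have h3 : N + 2 - (k + 1) = N + 1 - k := by omega
      rw [h3, hrec k, add_mul, mul_assoc]
    rw [Finset.sum_congr rfl hterm2, Finset.sum_add_distrib]
    -- cancel the common second sums
    rw [add_right_comm]
    congr 1
    -- remaining: ∑ C(f k) P(N+2-k) = ∑ C(f (k+1)) P(N+1-k) + P(N+2)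
    rw [Finset.sum_range_succ' _ (N + 1)]
    have h0 : C (fkm m b N 0) * ffPoly m (N + 2 - 0) = ffPoly m (N + 2) := by
      rw [fkm_zero, map_one, one_mul]
      norm_num
    rw [h0]
    rw [Finset.sum_range_succ _ (N + 1)]
    have hlast : C (fkm m b N (N + 1 + 1)) * ffPoly m (N + 1 - (N + 1)) = 0 := by
      rw [fkm_eq_zero_of_gt m b N (N + 2) (by omega)]
      simp
    rw [hlast, add_zero]
    congr 1
    apply Finset.sum_congr rfl
    intro k hk
    have : N + 2 - (k + 1) = N + 1 - k := by omega
    rw [this]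

lemma ffPoly_lin_indep (m : ℕ) : ∀ (N : ℕ) (c : ℕ → ℤ),
    (∑ r ∈ Finset.range N, C (c r) * ffPoly m r) = 0 → ∀ r < N, c r = 0 := by
  intro N
  induction N with
  | zero => intro c _ r hr; omega
  | succ N ih =>
    intro c hc
    have hcoeff : (∑ r ∈ Finset.range (N + 1), C (c r) * ffPoly m r).coeff N = c N := by
      rw [finset_sum_coeff, Finset.sum_range_succ]
      have h1 : ∀ r ∈ Finset.range N, (C (c r) * ffPoly m r).coeff N = 0 := by
        intro r hr
        rw [Finset.mem_range] at hr
        rw [coeff_C_mul]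
        rw [coeff_eq_zero_of_natDegree_lt (by rw [ffPoly_natDegree]; omega)]
        ring
      rw [Finset.sum_congr rfl h1, Finset.sum_const, coeff_C_mul]
      have : (ffPoly m N).coeff N = 1 := by
        have := (ffPoly_monic m N).coeff_natDegree
        rwa [ffPoly_natDegree] at this
      rw [this]
      simp
    have hcN : c N = 0 := by rw [← hcoeff, hc, coeff_zero]
    have hrest : (∑ r ∈ Finset.range N, C (c r) * ffPoly m r) = 0 := by
      have := hc
      rw [Finset.sum_range_succ, hcN] at this
      simpa using this
    intro r hr
    rcases Nat.lt_succ_iff_lt_or_eq.1 hr with h | h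
    · exact ih c hrest r h
    · exact h ▸ hcN

lemma prod_as_multiset (m N : ℕ) (b : ℕ → ℕ) :
    ∏ j ∈ Finset.range (N + 1), (X - C ((m : ℤ) * j - b j)) =
      (((Finset.range (N + 1)).val.map (fun j => (m : ℤ) * j - b j)).map
        (fun x => X - C x)).prod := by
  rw [Finset.prod_eq_multiset_prod, Multiset.map_map]
  rfl

lemma fkm_iff_multiset (m N : ℕ) (b b' : ℕ → ℕ)
    (hb : ∀ i j, i ≤ j → j ≤ N → b i ≤ b j) (hb' : ∀ i j, i ≤ j → j ≤ N → b' i ≤ b' j) :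
    (∀ k, fkm m b N k = fkm m b' N k) ↔
      ((Finset.range (N + 1)).val.map (fun j => (m : ℤ) * j - b j)) =
        ((Finset.range (N + 1)).val.map (fun j => (m : ℤ) * j - b' j)) := by
  constructor
  · intro h
    have hpoly : ∏ j ∈ Finset.range (N + 1), (X - C ((m : ℤ) * j - b j)) =
        ∏ j ∈ Finset.range (N + 1), (X - C ((m : ℤ) * j - b' j)) := by
      rw [prod_formula m N b hb, prod_formula m N b' hb']
      exact Finset.sum_congr rfl (fun k _ => by rw [h k])
    rw [prod_as_multiset, prod_as_multiset] at hpoly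
    have := congrArg Polynomial.roots hpoly
    rwa [roots_multiset_prod_X_sub_C, roots_multiset_prod_X_sub_C] at this
  · intro h k
    have hpoly : ∏ j ∈ Finset.range (N + 1), (X - C ((m : ℤ) * j - b j)) =
        ∏ j ∈ Finset.range (N + 1), (X - C ((m : ℤ) * j - b' j)) := by
      rw [prod_as_multiset, prod_as_multiset, h]
    rw [prod_formula m N b hb, prod_formula m N b' hb'] at hpoly
    -- reindex both sums
    have hre : ∀ (f : ℕ → ℤ), ∑ k ∈ Finset.range (N + 2), C (f k) * ffPoly m (N + 1 - k)
        = ∑ r ∈ Finset.range (N + 2), C (f (N + 1 - r)) * ffPoly m r := by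
      intro f
      rw [← Finset.sum_range_reflect]
      apply Finset.sum_congr rfl
      intro r hr
      rw [Finset.mem_range] at hr
      congr 2 <;> omega
    rw [hre, hre] at hpoly
    have hzero : (∑ r ∈ Finset.range (N + 2),
        C ((fun r => fkm m b N (N + 1 - r) - fkm m b' N (N + 1 - r)) r) * ffPoly m r) = 0 := by
      simp only [map_sub, sub_mul]
      rw [Finset.sum_sub_distrib, hpoly, sub_self]
    have hall := ffPoly_lin_indep m (N + 2) _ hzero
    by_cases hk : k ≤ N + 1
    · have := hall (N + 1 - k) (by omega)
      have heq : N + 1 - (N + 1 - k) = k := by omega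
      rw [heq] at this
      linarith
    · rw [fkm_eq_zero_of_gt m b N k (by omega), fkm_eq_zero_of_gt m b' N k (by omega)]

/-- Extend a vector of `L` column heights (columns `0,…,L-1`) to a function `ℕ → ℕ`. -/
def extBoard (L : ℕ) (v : Fin L → ℕ) : ℕ → ℕ :=
  fun j => if h : j < L then v ⟨j, h⟩ else 0

/-- The type of Ferrers boards fitting in `Δ_{n,m} = (0, m, …, (n−1)m)`:
weakly increasing vectors `(b_0,…,b_{n−1})` with `b_j ≤ jm`. -/
def SubTriangular (n m : ℕ) : Type :=
  {v : Fin n → ℕ // Monotone v ∧ ∀ j : Fin n, v j ≤ (j : ℕ) * m}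

/-- `m`-weight file equivalence, as a setoid on boards fitting in `Δ_{n,m}`. -/
def weightSetoid (n m : ℕ) : Setoid (SubTriangular n m) :=
  ⟨fun u v => ∀ k, fkm m (extBoard n u.1) (n - 1) k = fkm m (extBoard n v.1) (n - 1) k,
    ⟨fun _ _ => rfl, fun h k => (h k).symm, fun h1 h2 k => (h1 k).trans (h2 k)⟩⟩

/-! ### Counting -/

def lget (L : List ℕ) (i : ℕ) : ℕ := L.getD i 0

lemma lget_mono {L : List ℕ} (hs : L.Pairwise (· ≤ ·)) {p q : ℕ} (hpq : p ≤ q)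
    (hq : q < L.length) : lget L p ≤ lget L q := by
  have hp : p < L.length := lt_of_le_of_lt hpq hq
  rw [lget, lget, List.getD_eq_getElem _ _ hp, List.getD_eq_getElem _ _ hq]
  exact hs.rel_get_of_le (a := ⟨p, hp⟩) (b := ⟨q, hq⟩) hpq

lemma lget_lt_index {L : List ℕ} (hs : L.Pairwise (· ≤ ·)) {p q : ℕ}
    (hp : p < L.length) (hq : q < L.length) (h : lget L p < lget L q) : p < q := by
  by_contra hc
  push_neg at hc
  exact absurd (lget_mono hs hc hp) (by omega)

lemma sorted_of_steps (n m : ℕ) (hn : 0 < n) (ω : ℕ → ℕ) (h0 : ω 0 = 0)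
    (hstep : ∀ j, j + 1 < n → ω (j + 1) ≤ ω j + m)
    (L : List ℕ) (hL : L.length = n) (hsort : L.Pairwise (· ≤ ·))
    (hmem : ∀ x, x ∈ L ↔ ∃ j, j < n ∧ ω j = x) :
    lget L 0 = 0 ∧ ∀ i, i + 1 < n → lget L (i + 1) ≤ lget L i + m := by
  have hzero : lget L 0 = 0 := by
    have h0L : (0 : ℕ) ∈ L := (hmem 0).2 ⟨0, hn, h0⟩
    obtain ⟨p, hp, hLp⟩ := List.mem_iff_getElem.1 h0L
    have h1 : lget L 0 ≤ lget L p := lget_mono hsort (Nat.zero_le p) hp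
    have h2 : lget L p = 0 := by rw [lget, List.getD_eq_getElem _ _ hp]; exact hLp
    rw [h2] at h1
    exact Nat.le_zero.1 h1
  refine ⟨hzero, fun i hi => ?_⟩
  by_cases hS : ∃ j, j < n ∧ lget L i < ω j
  · have j0 := Nat.find hS
    have hspec := Nat.find_spec hS
    set j0 := Nat.find hS with hj0
    have hj0ne : j0 ≠ 0 := by
      intro h
      rw [h, h0] at hspec
      omega
    have hmin : ¬ (j0 - 1 < n ∧ lget L i < ω (j0 - 1)) := Nat.find_min hS (by omega)
    have hle : ω (j0 - 1) ≤ lget L i := by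
      have : j0 - 1 < n := by omega
      by_contra hc
      exact hmin ⟨this, by omega⟩
    have hj0step : ω j0 ≤ lget L i + m := by
      have := hstep (j0 - 1) (by omega)
      have h' : j0 - 1 + 1 = j0 := by omega
      rw [h'] at this
      omega
    have hj0L : ω j0 ∈ L := (hmem (ω j0)).2 ⟨j0, hspec.1, rfl⟩
    obtain ⟨p, hp, hLp⟩ := List.mem_iff_getElem.1 hj0L
    have hlgp : lget L p = ω j0 := by rw [lget, List.getD_eq_getElem _ _ hp, hLp]
    have hip : i < p := lget_lt_index hsort (by omega) hp (by omega)
    have := lget_mono hsort (show i + 1 ≤ p by omega) hp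
    omega
  · push_neg at hS
    have hmem' : lget L (i + 1) ∈ L := by
      rw [lget, List.getD_eq_getElem _ _ (by omega)]
      exact List.getElem_mem _
    obtain ⟨j, hj, hωj⟩ := (hmem _).1 hmem'
    have := hS j hj
    omega

def Wsum (n m : ℕ) (d : Fin (n - 1) → Fin (m + 1)) (j : ℕ) : ℕ :=
  ∑ i ∈ Finset.range j, (if h : i < n - 1 then (d ⟨i, h⟩ : ℕ) else 0)

lemma Wsum_succ (n m : ℕ) (d : Fin (n - 1) → Fin (m + 1)) (j : ℕ) :
    Wsum n m d (j + 1) = Wsum n m d j + (if h : j < n - 1 then (d ⟨j, h⟩ : ℕ) else 0) :=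
  Finset.sum_range_succ _ _

lemma Wsum_step_le (n m : ℕ) (d : Fin (n - 1) → Fin (m + 1)) (j : ℕ) :
    (if h : j < n - 1 then (d ⟨j, h⟩ : ℕ) else 0) ≤ m := by
  split
  · exact Nat.lt_succ_iff.1 (Fin.is_lt _)
  · omega

lemma Wsum_le (n m : ℕ) (d : Fin (n - 1) → Fin (m + 1)) (j : ℕ) :
    Wsum n m d j ≤ j * m := by
  induction j with
  | zero => simp [Wsum]
  | succ j ih =>
    rw [Wsum_succ]
    have := Wsum_step_le n m d j
    have : (j + 1) * m = j * m + m := by ring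
    omega

def eBoard (n m : ℕ) (d : Fin (n - 1) → Fin (m + 1)) : SubTriangular n m := by
  refine ⟨fun j => (j : ℕ) * m - Wsum n m d j, ?_, fun j => Nat.sub_le _ _⟩
  intro a b hab
  simp only
  have hab' : (a : ℕ) ≤ (b : ℕ) := hab
  clear hab
  generalize (b : ℕ) = B at hab' ⊢
  induction B, hab' using Nat.le_induction with
  | base => exact le_refl _
  | succ c hc ih =>
    have h1 := Wsum_le n m d c
    have h2 := Wsum_succ n m d c
    have h3 := Wsum_step_le n m d c
    have h4 : (c + 1) * m = c * m + m := by ring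
    omega

def PhiN (n m : ℕ) (u : SubTriangular n m) : Multiset ℕ :=
  (Finset.range n).val.map (fun j => j * m - extBoard n u.1 j)

def sortedL (n m : ℕ) (u : SubTriangular n m) : List ℕ :=
  Multiset.sort (PhiN n m u) (· ≤ ·)

lemma sortedL_length (n m : ℕ) (u : SubTriangular n m) : (sortedL n m u).length = n := by
  rw [sortedL, Multiset.length_sort, PhiN, Multiset.card_map]
  simp

lemma sortedL_sorted (n m : ℕ) (u : SubTriangular n m) :
    (sortedL n m u).Pairwise (· ≤ ·) := Multiset.pairwise_sort _ _

lemma sortedL_coe (n m : ℕ) (u : SubTriangular n m) :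
    ((sortedL n m u) : Multiset ℕ) = PhiN n m u := Multiset.sort_eq _ _

def decFun (n m : ℕ) (u : SubTriangular n m) : Fin (n - 1) → Fin (m + 1) :=
  fun i => ⟨min m (lget (sortedL n m u) (i + 1) - lget (sortedL n m u) i),
    Nat.lt_succ_of_le (min_le_left _ _)⟩

lemma extBoard_lt {n : ℕ} (v : Fin n → ℕ) {j : ℕ} (h : j < n) :
    extBoard n v j = v ⟨j, h⟩ := dif_pos h

lemma omega_step (n m : ℕ) (u : SubTriangular n m) :
    (fun j => j * m - extBoard n u.1 j) 0 = 0 ∧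
    ∀ j, j + 1 < n → (fun j => j * m - extBoard n u.1 j) (j + 1) ≤
      (fun j => j * m - extBoard n u.1 j) j + m := by
  constructor
  · simp
  · intro j hj
    simp only
    rw [extBoard_lt u.1 (show j < n by omega), extBoard_lt u.1 hj]
    have h1 : u.1 ⟨j, by omega⟩ ≤ u.1 ⟨j + 1, hj⟩ := u.2.1 (by simp [Fin.mk_le_mk])
    have h2 : u.1 ⟨j, by omega⟩ ≤ j * m := u.2.2 ⟨j, by omega⟩
    have h3 : (j + 1) * m = j * m + m := by ring
    omega

lemma mem_sortedL (n m : ℕ) (u : SubTriangular n m) (x : ℕ) :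
    x ∈ sortedL n m u ↔ ∃ j, j < n ∧ (fun j => j * m - extBoard n u.1 j) j = x := by
  rw [sortedL, Multiset.mem_sort, PhiN, Multiset.mem_map]
  constructor
  · rintro ⟨j, hj, rfl⟩
    exact ⟨j, Finset.mem_range.1 (Finset.mem_val.mp hj), rfl⟩
  · rintro ⟨j, hj, rfl⟩
    exact ⟨j, Finset.mem_val.mpr (Finset.mem_range.2 hj), rfl⟩

lemma sortedL_facts (n m : ℕ) (hn : 0 < n) (u : SubTriangular n m) :
    lget (sortedL n m u) 0 = 0 ∧
    ∀ i, i + 1 < n → lget (sortedL n m u) (i + 1) ≤ lget (sortedL n m u) i + m := by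
  obtain ⟨h0, hstep⟩ := omega_step n m u
  exact sorted_of_steps n m hn _ h0 hstep (sortedL n m u) (sortedL_length n m u)
    (sortedL_sorted n m u) (mem_sortedL n m u)

lemma Wsum_decFun (n m : ℕ) (hn : 0 < n) (u : SubTriangular n m) :
    ∀ j, j < n → Wsum n m (decFun n m u) j = lget (sortedL n m u) j := by
  obtain ⟨h0, hgap⟩ := sortedL_facts n m hn u
  intro j
  induction j with
  | zero => intro _; rw [h0]; simp [Wsum]
  | succ j ih =>
    intro hj
    rw [Wsum_succ, ih (by omega)]
    have hjn : j < n - 1 := by omega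
    rw [dif_pos hjn]
    have hgapj := hgap j (by omega)
    have hmin : (decFun n m u ⟨j, hjn⟩ : ℕ)
        = lget (sortedL n m u) (j + 1) - lget (sortedL n m u) j := by
      simp only [decFun]
      omega
    rw [hmin]
    have hmono : lget (sortedL n m u) j ≤ lget (sortedL n m u) (j + 1) :=
      lget_mono (sortedL_sorted n m u) (by omega) (by rw [sortedL_length]; omega)
    omega

lemma PhiN_eBoard (n m : ℕ) (d : Fin (n - 1) → Fin (m + 1)) :
    PhiN n m (eBoard n m d) = (Finset.range n).val.map (Wsum n m d) := by
  rw [PhiN]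
  apply Multiset.map_congr rfl
  intro j hj
  have hjn : j < n := Finset.mem_range.1 (Finset.mem_val.mp hj)
  rw [extBoard_lt _ hjn]
  have := Wsum_le n m d j
  show j * m - (j * m - Wsum n m d j) = Wsum n m d j
  omega

lemma PhiN_eBoard_decFun (n m : ℕ) (hn : 0 < n) (u : SubTriangular n m) :
    PhiN n m (eBoard n m (decFun n m u)) = PhiN n m u := by
  rw [PhiN_eBoard]
  have hW := Wsum_decFun n m hn u
  have h1 : (Finset.range n).val.map (Wsum n m (decFun n m u))
      = (Finset.range n).val.map (lget (sortedL n m u)) :=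
    Multiset.map_congr rfl (fun j hj => hW j (Finset.mem_range.1 (Finset.mem_val.mp hj)))
  rw [h1, ← sortedL_coe n m u]
  have hlen := sortedL_length n m u
  have h2 : (List.range n).map (lget (sortedL n m u)) = sortedL n m u := by
    apply List.ext_getElem
    · rw [List.length_map, List.length_range, hlen]
    · intro i h1' h2'
      rw [List.getElem_map, List.getElem_range, lget, List.getD_eq_getElem _ _ (by omega)]
  calc (Finset.range n).val.map (lget (sortedL n m u))
      = ((List.range n : List ℕ) : Multiset ℕ).map (lget (sortedL n m u)) := by
        rfl
    _ = (((List.range n).map (lget (sortedL n m u)) : List ℕ) : Multiset ℕ) := by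
        rw [Multiset.map_coe]
    _ = ((sortedL n m u : List ℕ) : Multiset ℕ) := by rw [h2]

lemma sortedL_eBoard (n m : ℕ) (d : Fin (n - 1) → Fin (m + 1)) :
    sortedL n m (eBoard n m d) = (List.range n).map (Wsum n m d) := by
  apply fun h1 h2 h3 => List.Perm.eq_of_pairwise' (r := ((· ≤ ·) : ℕ → ℕ → Prop)) h2 h3 h1
  · apply Multiset.coe_eq_coe.1
    rw [sortedL_coe, PhiN_eBoard]
    rfl
  · exact sortedL_sorted n m _
  · -- sortedness of the mapped range
    apply List.Pairwise.map
    swap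
    · exact List.pairwise_lt_range (n := n)
    · intro a b hab
      -- Wsum monotone
      have : ∀ p q : ℕ, p ≤ q → Wsum n m d p ≤ Wsum n m d q := by
        intro p q hpq
        apply Finset.sum_le_sum_of_subset
        exact Finset.range_subset_range.2 hpq
      exact this a b (le_of_lt hab)

lemma decFun_eBoard (n m : ℕ) (d : Fin (n - 1) → Fin (m + 1)) :
    decFun n m (eBoard n m d) = d := by
  funext i
  apply Fin.ext
  simp only [decFun]
  have hL := sortedL_eBoard n m d
  have hi1 : (i : ℕ) + 1 < n := by omega
  have hget : ∀ j, j < n → lget (sortedL n m (eBoard n m d)) j = Wsum n m d j := by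
    intro j hj
    rw [hL, lget, List.getD_eq_getElem _ _ (by simp [List.length_map, List.length_range]; omega)]
    rw [List.getElem_map, List.getElem_range]
  rw [hget _ hi1, hget _ (by omega), Wsum_succ]
  rw [dif_pos i.isLt]
  have hdm : (d ⟨(i : ℕ), i.isLt⟩ : ℕ) ≤ m := Nat.lt_succ_iff.1 (Fin.is_lt _)
  have : Wsum n m d i + (d ⟨(i : ℕ), i.isLt⟩ : ℕ) - Wsum n m d i = (d ⟨(i : ℕ), i.isLt⟩ : ℕ) := by
    omega
  rw [this]
  have : (⟨(i : ℕ), i.isLt⟩ : Fin (n - 1)) = i := rfl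
  rw [this]
  omega

lemma r_iff_PhiN (n m : ℕ) (hn : 0 < n) (u v : SubTriangular n m) :
    (∀ k, fkm m (extBoard n u.1) (n - 1) k = fkm m (extBoard n v.1) (n - 1) k) ↔
      PhiN n m u = PhiN n m v := by
  obtain ⟨N, rfl⟩ : ∃ N, n = N + 1 := ⟨n - 1, by omega⟩
  have hsub : N + 1 - 1 = N := by omega
  rw [hsub]
  have hmono : ∀ (w : SubTriangular (N + 1) m), ∀ i j, i ≤ j → j ≤ N →
      extBoard (N + 1) w.1 i ≤ extBoard (N + 1) w.1 j := by
    intro w i j hij hj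
    rw [extBoard_lt _ (show i < N + 1 by omega), extBoard_lt _ (show j < N + 1 by omega)]
    exact w.2.1 (Fin.mk_le_mk.2 hij)
  rw [fkm_iff_multiset m N _ _ (hmono u) (hmono v)]
  have hcast : ∀ (w : SubTriangular (N + 1) m),
      (Finset.range (N + 1)).val.map (fun j => (m : ℤ) * j - extBoard (N + 1) w.1 j)
        = Multiset.map (Nat.cast : ℕ → ℤ) (PhiN (N + 1) m w) := by
    intro w
    rw [PhiN, Multiset.map_map]
    apply Multiset.map_congr rfl
    intro j hj
    have hjn : j < N + 1 := Finset.mem_range.1 (Finset.mem_val.mp hj)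
    simp only [Function.comp_apply]
    rw [extBoard_lt _ hjn]
    have hle : w.1 ⟨j, hjn⟩ ≤ j * m := w.2.2 _
    rw [Nat.cast_sub hle]
    push_cast
    ring
  rw [hcast u, hcast v]
  exact ⟨fun h => Multiset.map_injective Nat.cast_injective h, fun h => by rw [h]⟩

/-- Proposition 8.3 (second statement): the number of `m`-weight file equivalence
classes of Ferrers boards fitting in `Δ_{n,m}` is `(m+1)^{n−1}`. -/
theorem count_weight_classes_in_triangle (n m : ℕ) (hn : 0 < n) (hm : 0 < m) :
    Nat.card (Quotient (weightSetoid n m)) = (m + 1) ^ (n - 1) := by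
  have E1 : ∀ u v : SubTriangular n m,
      (∀ k, fkm m (extBoard n u.1) (n - 1) k = fkm m (extBoard n v.1) (n - 1) k) ↔
        PhiN n m u = PhiN n m v := r_iff_PhiN n m hn
  let eqv : Quotient (weightSetoid n m) ≃ (Fin (n - 1) → Fin (m + 1)) :=
  { toFun := Quotient.lift (decFun n m) (by
      intro u v h
      have hp : PhiN n m u = PhiN n m v := (E1 u v).1 h
      have hs : sortedL n m u = sortedL n m v := by
        unfold sortedL
        rw [hp]
      unfold decFun
      exact congrArg (fun L => (fun i : Fin (n - 1) =>
        (⟨min m (lget L ((i : ℕ) + 1) - lget L (i : ℕ)),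
          Nat.lt_succ_of_le (min_le_left _ _)⟩ : Fin (m + 1)))) hs)
    invFun := fun d => Quotient.mk (weightSetoid n m) (eBoard n m d)
    left_inv := by
      intro q
      induction q using Quotient.inductionOn with
      | h u =>
        apply Quotient.sound
        exact (E1 _ _).2 (PhiN_eBoard_decFun n m hn u)
    right_inv := by
      intro d
      exact decFun_eBoard n m d }
  rw [Nat.card_congr eqv, Nat.card_eq_fintype_card, Fintype.card_fun,
    Fintype.card_fin, Fintype.card_fin]
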